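/- (L^q norms of the translated derivative of the bubble) Let s ∈ (0,1), let N be an integer with N > 2s, let Ω ⊂ ℝ^N be a bounded open set, let K ⊂ Ω be compact, let q ∈ [1,∞) and i ∈ {1,…,N}. Let V_{x,λ}(y) := ∂_{x_i} U_{x,λ}(y) = −(N−2s) λ^{(N−2s+2)/2} · λ(x_i−y_i)/(1+λ²|x−y|²)^{(N−2s+2)/2}. Define ρ(q,λ) := λ^{(N−2s+2)/2 − N/q} if q > N/(N−2s+1); ρ(q,λ) := λ^{−(N−2s)/2}(log λ)^{(N−2s+1)/N} if q = N/(N−2s+1); and ρ(q,λ) := λ^{−(N−2s)/2} if q < N/(N−2s+1). Then there exist constants 0 < c ≤ C and λ₀ ≥ 2 such that for all x ∈ K and all λ ≥ λ₀, c·ρ(q,λ) ≤ ‖V_{x,λ}‖_{L^q(Ω)} ≤ C·ρ(q,λ). -/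

import Mathlib

open MeasureTheory Real

noncomputable section

abbrev Euc (N : ℕ) := EuclideanSpace ℝ (Fin N)

/-- The `x_i`-derivative of the Aubin–Talenti bubble:
`∂_{x_i} U_{x,λ}(y) = -(N-2s) λ^{(N-2s+2)/2} · λ(x_i-y_i)/(1+λ²|x-y|²)^{(N-2s+2)/2}`. -/
def bubbleDx (N : ℕ) (s : ℝ) (i : Fin N) (x : Euc N) (lam : ℝ) (y : Euc N) : ℝ :=
  -((N : ℝ) - 2 * s) * lam ^ (((N : ℝ) - 2 * s + 2) / 2) *
    (lam * (x i - y i)) / (1 + lam ^ 2 * ‖x - y‖ ^ 2) ^ (((N : ℝ) - 2 * s + 2) / 2)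

/-- The asymptotic rate `ρ(q,λ)` for `‖∂_{x_i} U_{x,λ}‖_{L^q(Ω)}`. -/
def bubbleDxRate (N : ℕ) (s : ℝ) (q lam : ℝ) : ℝ :=
  if (N : ℝ) / ((N : ℝ) - 2 * s + 1) < q then
    lam ^ (((N : ℝ) - 2 * s + 2) / 2 - (N : ℝ) / q)
  else if q = (N : ℝ) / ((N : ℝ) - 2 * s + 1) then
    lam ^ (-(((N : ℝ) - 2 * s) / 2)) * Real.log lam ^ (((N : ℝ) - 2 * s + 1) / (N : ℝ))
  else lam ^ (-(((N : ℝ) - 2 * s) / 2))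

namespace St10

noncomputable def g (m p u : ℝ) : ℝ := u ^ m * (1 + u ^ 2) ^ (-p)

noncomputable def Psi (m p T : ℝ) : ℝ := ∫ u in (0:ℝ)..T, g m p u

lemma g_nonneg (m p : ℝ) {u : ℝ} (hu : 0 ≤ u) : 0 ≤ g m p u := by
  unfold g; positivity

lemma g_cont (m p : ℝ) (hm : 0 < m) : Continuous (g m p) := by
  apply Continuous.mul
  · exact continuous_iff_continuousAt.2 fun x => Real.continuousAt_rpow_const x m (Or.inr hm.le)
  · apply Continuous.rpow_const (by continuity)
    intro x; left; positivity

lemma g_intInt (m p : ℝ) (hm : 0 < m) (a b : ℝ) : IntervalIntegrable (g m p) volume a b :=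
  (g_cont m p hm).intervalIntegrable a b

lemma Psi_mono (m p : ℝ) (hm : 0 < m) {a b : ℝ} (ha : 0 ≤ a) (hab : a ≤ b) :
    Psi m p a ≤ Psi m p b := by
  unfold Psi
  rw [← intervalIntegral.integral_add_adjacent_intervals (g_intInt m p hm 0 a) (g_intInt m p hm a b)]
  have : 0 ≤ ∫ u in a..b, g m p u := by
    apply intervalIntegral.integral_nonneg hab
    intro u hu; exact g_nonneg m p (ha.trans hu.1)
  linarith

lemma Psi_nonneg (m p : ℝ) (hm : 0 < m) {T : ℝ} (hT : 0 ≤ T) : 0 ≤ Psi m p T := by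
  apply intervalIntegral.integral_nonneg hT
  intro u hu; exact g_nonneg m p hu.1

lemma Psi_one_pos (m p : ℝ) (hm : 0 < m) : 0 < Psi m p 1 := by
  apply intervalIntegral.intervalIntegral_pos_of_pos_on (g_intInt m p hm 0 1)
  · intro x hx
    have : 0 < x := hx.1
    unfold g; positivity
  · norm_num

/-- comparison of the middle piece with a power integral -/
lemma mid_bounds (m p : ℝ) (hm : 0 < m) (hp : 0 < p) {T : ℝ} (hT : 1 ≤ T) :
    (2:ℝ) ^ (-p) * ∫ u in (1:ℝ)..T, u ^ (m - 2*p) ≤ (∫ u in (1:ℝ)..T, g m p u) ∧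
      (∫ u in (1:ℝ)..T, g m p u) ≤ ∫ u in (1:ℝ)..T, u ^ (m - 2*p) := by
  have hpow : IntervalIntegrable (fun u : ℝ => u ^ (m - 2*p)) volume 1 T := by
    apply ContinuousOn.intervalIntegrable
    apply ContinuousOn.rpow_const (by fun_prop)
    intro x hx
    rw [Set.uIcc_of_le hT] at hx
    left; exact ne_of_gt (lt_of_lt_of_le one_pos hx.1)
  have key : ∀ u : ℝ, 1 ≤ u → (2:ℝ) ^ (-p) * u ^ (m - 2*p) ≤ g m p u ∧ g m p u ≤ u ^ (m - 2*p) := by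
    intro u hu
    have hu0 : (0:ℝ) < u := lt_of_lt_of_le one_pos hu
    have h1 : (u:ℝ) ^ (2:ℕ) ≤ 1 + u ^ 2 := by nlinarith
    have h2 : 1 + u ^ (2:ℕ) ≤ 2 * u ^ 2 := by nlinarith
    have e1 : (1 + u ^ 2) ^ (-p) ≤ (u ^ (2:ℕ)) ^ (-p) := by
      apply Real.rpow_le_rpow_of_nonpos (by positivity) h1 (by linarith)
    have e2 : (2 * u ^ 2 : ℝ) ^ (-p) ≤ (1 + u ^ 2) ^ (-p) := by
      apply Real.rpow_le_rpow_of_nonpos (by positivity) h2 (by linarith)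
    have eq1 : (u ^ (2:ℕ) : ℝ) ^ (-p) = u ^ (-(2*p)) := by
      rw [← Real.rpow_natCast u 2, ← Real.rpow_mul hu0.le]
      norm_num
    have eq2 : (2 * u ^ 2 : ℝ) ^ (-p) = 2 ^ (-p) * u ^ (-(2*p)) := by
      rw [Real.mul_rpow (by norm_num) (by positivity), eq1.symm]
    have eq3 : u ^ m * u ^ (-(2*p)) = u ^ (m - 2*p) := by
      rw [← Real.rpow_add hu0]; ring_nf
    constructor
    · calc (2:ℝ) ^ (-p) * u ^ (m - 2*p) = u ^ m * ((2:ℝ) ^ (-p) * u ^ (-(2*p))) := by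
            rw [← eq3]; ring
        _ ≤ g m p u := by
            unfold g
            apply mul_le_mul_of_nonneg_left _ (by positivity)
            rw [← eq2]; exact e2
    · calc g m p u ≤ u ^ m * (u ^ (2:ℕ)) ^ (-p) := by
            unfold g
            apply mul_le_mul_of_nonneg_left e1 (by positivity)
        _ = u ^ (m - 2*p) := by rw [eq1, eq3]
  constructor
  · rw [← intervalIntegral.integral_const_mul]
    apply intervalIntegral.integral_mono_on hT (hpow.const_mul _) (g_intInt m p hm 1 T)
    intro u hu; exact (key u hu.1).1
  · apply intervalIntegral.integral_mono_on hT (g_intInt m p hm 1 T) hpow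
    intro u hu; exact (key u hu.1).2

noncomputable def rate1D (γ T : ℝ) : ℝ := if 0 < γ then T ^ γ else if γ = 0 then Real.log T else 1

lemma Psi_split (m p : ℝ) (hm : 0 < m) (T : ℝ) :
    Psi m p T = Psi m p 1 + ∫ u in (1:ℝ)..T, g m p u := by
  unfold Psi
  rw [← intervalIntegral.integral_add_adjacent_intervals (g_intInt m p hm 0 1) (g_intInt m p hm 1 T)]

theorem Psi_asymp (m p : ℝ) (hm : 0 < m) (hp : 0 < p) :
    ∃ c C T0 : ℝ, 0 < c ∧ c ≤ C ∧ 2 ≤ T0 ∧ ∀ T, T0 ≤ T →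
      c * rate1D (m - 2*p + 1) T ≤ Psi m p T ∧ Psi m p T ≤ C * rate1D (m - 2*p + 1) T := by
  set γ := m - 2*p + 1 with hγ
  rcases lt_trichotomy γ 0 with hneg | hzero | hpos
  · -- convergent case : rate = 1
    have hγpos : (0:ℝ) < 1/(-γ) := one_div_pos.mpr (neg_pos.mpr hneg)
    refine ⟨Psi m p 1, Psi m p 1 + 1/(-γ), 2, Psi_one_pos m p hm, by linarith, le_refl _, ?_⟩
    intro T hT
    have hT1 : (1:ℝ) ≤ T := by linarith
    have hrate : rate1D γ T = 1 := by
      unfold rate1D; rw [if_neg (by linarith), if_neg (by linarith)]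
    rw [hrate, mul_one, mul_one]
    constructor
    · exact Psi_mono m p hm (by norm_num) hT1
    · rw [Psi_split m p hm T]
      have hub := (mid_bounds m p hm hp hT1).2
      have hint : ∫ u in (1:ℝ)..T, u ^ (m - 2*p) = (T ^ γ - 1)/γ := by
        rw [integral_rpow (Or.inr ⟨by intro h; rw [hγ] at hneg; linarith,
          by simp [Set.uIcc_of_le hT1]⟩)]
        simp only [Real.one_rpow, hγ]
      rw [hint] at hub
      have hTγ : T ^ γ ≤ 1 := by
        apply Real.rpow_le_one_of_one_le_of_nonpos hT1 hneg.le
      have hTγ0 : 0 < T ^ γ := Real.rpow_pos_of_pos (by linarith) γ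
      have : (T ^ γ - 1)/γ ≤ 1/(-γ) := by
        rw [div_le_iff_of_neg hneg]
        have : 1/(-γ) * γ = -1 := by
          rw [div_mul_eq_mul_div, one_mul, div_neg, div_self hneg.ne]
        linarith
      linarith
  · -- critical case: rate = log T
    have h2p : (2:ℝ) ^ (-p) ≤ 1 :=
      Real.rpow_le_one_of_one_le_of_nonpos (by norm_num) (by linarith)
    have hlog2 : (0:ℝ) < Real.log 2 := Real.log_pos (by norm_num)
    have hPsi1 : 0 ≤ Psi m p 1 := Psi_nonneg m p hm (by norm_num)
    refine ⟨(2:ℝ) ^ (-p), Psi m p 1 / Real.log 2 + 1, 2, by positivity, ?_, le_refl _, ?_⟩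
    · have : 0 ≤ Psi m p 1 / Real.log 2 := by positivity
      linarith
    intro T hT
    have hT1 : (1:ℝ) ≤ T := by linarith
    have hlogT : Real.log 2 ≤ Real.log T := Real.log_le_log (by norm_num) hT
    have hlogT0 : 0 < Real.log T := lt_of_lt_of_le hlog2 hlogT
    have hrate : rate1D γ T = Real.log T := by
      unfold rate1D; rw [if_neg (by simp [hzero]), if_pos hzero]
    rw [hrate]
    have hm2p : m - 2*p = -1 := by linarith [hγ ▸ hzero]
    have hint : ∫ u in (1:ℝ)..T, u ^ (m - 2*p) = Real.log T := by
      rw [hm2p]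
      have : ∫ u in (1:ℝ)..T, u ^ (-1:ℝ) = ∫ u in (1:ℝ)..T, 1/u := by
        apply intervalIntegral.integral_congr
        intro u hu
        rw [Set.uIcc_of_le hT1] at hu
        have : (0:ℝ) < u := lt_of_lt_of_le one_pos hu.1
        show u ^ (-1:ℝ) = 1/u
        rw [Real.rpow_neg_one, one_div]
      rw [this, integral_one_div (by simp [Set.uIcc_of_le hT1]), div_one]
    have hmb := mid_bounds m p hm hp hT1
    rw [hint] at hmb
    rw [Psi_split m p hm T]
    constructor
    · linarith [hmb.1]
    · have : Psi m p 1 ≤ Psi m p 1 / Real.log 2 * Real.log T := by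
        rw [div_mul_eq_mul_div, le_div_iff₀ hlog2]
        exact mul_le_mul_of_nonneg_left hlogT hPsi1
      linarith [hmb.2]
  · -- growth case: rate = T ^ γ
    have h2p : (2:ℝ) ^ (-p) ≤ 1 :=
      Real.rpow_le_one_of_one_le_of_nonpos (by norm_num) (by linarith)
    have hPsi1 : 0 ≤ Psi m p 1 := Psi_nonneg m p hm (by norm_num)
    refine ⟨(2:ℝ) ^ (-p) / (2*γ), Psi m p 1 + 1/γ, max 2 ((2:ℝ) ^ (1/γ)), by positivity, ?_,
      le_max_left _ _, ?_⟩
    · have h1 : (2:ℝ) ^ (-p) / (2*γ) ≤ 1/(2*γ) := by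
        apply div_le_div_of_nonneg_right h2p (by positivity)
      have h2 : (1:ℝ)/(2*γ) ≤ 1/γ := by
        apply div_le_div_of_nonneg_left (by norm_num) hpos (by linarith)
      linarith
    intro T hT
    have hT2 : (2:ℝ) ≤ T := le_trans (le_max_left _ _) hT
    have hT1 : (1:ℝ) ≤ T := by linarith
    have hT0 : (0:ℝ) < T := by linarith
    have hTγ2 : (2:ℝ) ≤ T ^ γ := by
      have h := Real.rpow_le_rpow (by positivity) (le_trans (le_max_right _ _) hT) hpos.le
      rwa [← Real.rpow_mul (by norm_num), one_div_mul_cancel hpos.ne', Real.rpow_one] at h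
    have hTγ1 : (1:ℝ) ≤ T ^ γ := by linarith
    have hrate : rate1D γ T = T ^ γ := by unfold rate1D; rw [if_pos hpos]
    rw [hrate]
    have hint : ∫ u in (1:ℝ)..T, u ^ (m - 2*p) = (T ^ γ - 1)/γ := by
      rw [integral_rpow (Or.inr ⟨by intro h; rw [h] at hγ; rw [hγ] at hpos; linarith,
        by simp [Set.uIcc_of_le hT1]⟩)]
      simp only [Real.one_rpow, hγ]
    have hmb := mid_bounds m p hm hp hT1
    rw [hint] at hmb
    rw [Psi_split m p hm T]
    have h2pos : (0:ℝ) < (2:ℝ) ^ (-p) := by positivity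
    constructor
    · have key : (2:ℝ) ^ (-p) / (2*γ) * T ^ γ ≤ 2 ^ (-p) * ((T ^ γ - 1)/γ) := by
        rw [div_mul_eq_mul_div, mul_div_assoc]
        apply mul_le_mul_of_nonneg_left _ h2pos.le
        rw [div_le_div_iff₀ (by positivity) hpos]
        nlinarith
      linarith [hmb.1]
    · have key : (T ^ γ - 1)/γ ≤ 1/γ * T ^ γ := by
        rw [one_div, inv_mul_eq_div]
        gcongr
        linarith
      have : Psi m p 1 ≤ Psi m p 1 * T ^ γ := le_mul_of_one_le_right hPsi1 hTγ1
      nlinarith [hmb.2]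

lemma scaling {m p lam r : ℝ} (hm : 0 < m) (hlam : 0 < lam) (hr : 0 ≤ r) :
    ∫ t in (0:ℝ)..r, t ^ m * (1 + lam^2 * t^2) ^ (-p)
      = lam ^ (-(m+1)) * Psi m p (lam * r) := by
  have h1 : ∀ t ∈ Set.uIcc (0:ℝ) r, g m p (lam * t)
      = lam ^ m * (t ^ m * (1 + lam^2*t^2)^(-p)) := by
    intro t ht
    rw [Set.uIcc_of_le hr] at ht
    unfold g
    rw [Real.mul_rpow hlam.le ht.1]
    have h2 : (lam * t) ^ (2:ℕ) = lam ^ 2 * t ^ 2 := by ring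
    rw [h2]; ring
  have h2 : lam ^ m * ∫ t in (0:ℝ)..r, t ^ m * (1+lam^2*t^2)^(-p)
      = ∫ t in (0:ℝ)..r, g m p (lam * t) := by
    rw [← intervalIntegral.integral_const_mul]
    exact (intervalIntegral.integral_congr h1).symm
  have h3 : ∫ t in (0:ℝ)..r, g m p (lam * t) = lam⁻¹ • ∫ u in (lam*0)..(lam*r), g m p u :=
    intervalIntegral.integral_comp_mul_left _ hlam.ne'
  rw [mul_zero] at h3
  have h4 : lam ^ m * ∫ t in (0:ℝ)..r, t ^ m * (1+lam^2*t^2)^(-p)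
      = lam⁻¹ * Psi m p (lam * r) := by
    rw [h2, h3, smul_eq_mul]; rfl
  have hlm : (0:ℝ) < lam ^ m := Real.rpow_pos_of_pos hlam m
  have hexp : lam ^ (-(m+1)) = (lam ^ m)⁻¹ * lam⁻¹ := by
    rw [show -(m+1) = (-m) + (-1) by ring, Real.rpow_add hlam, Real.rpow_neg hlam.le,
      Real.rpow_neg_one]
  rw [hexp]
  field_simp at h4 ⊢
  linarith [h4]

lemma translate_ball {N : ℕ} (F : Euc N → ℝ) (x : Euc N) (r : ℝ) :
    ∫ y in Metric.ball x r, F (x - y) = ∫ z in Metric.ball (0:Euc N) r, F z := by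
  rw [← integral_indicator measurableSet_ball,
    ← integral_indicator measurableSet_ball]
  have key : ∀ y, Set.indicator (Metric.ball x r) (fun y => F (x - y)) y
      = Set.indicator (Metric.ball (0:Euc N) r) F (x - y) := by
    intro y
    have hiff : y ∈ Metric.ball x r ↔ x - y ∈ Metric.ball (0:Euc N) r := by
      rw [Metric.mem_ball, mem_ball_zero_iff, dist_eq_norm, ← norm_neg, neg_sub]
    by_cases h : y ∈ Metric.ball x r
    · rw [Set.indicator_of_mem h, Set.indicator_of_mem (hiff.mp h)]
    · rw [Set.indicator_of_notMem h, Set.indicator_of_notMem (fun hc => h (hiff.mpr hc))]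
  simp_rw [key]
  exact integral_sub_left_eq_self (Set.indicator (Metric.ball (0:Euc N) r) F) volume x

lemma radial_ball {N : ℕ} (hN : 0 < N) (φ : ℝ → ℝ) {r : ℝ} (hr : 0 < r) :
    ∫ z in Metric.ball (0 : Euc N) r, φ ‖z‖
      = (N : ℝ) * (volume (Metric.ball (0 : Euc N) 1)).toReal *
        ∫ t in Set.Ioo (0:ℝ) r, t ^ (N - 1 : ℕ) * φ t := by
  haveI : Nonempty (Fin N) := Fin.pos_iff_nonempty.mp hN
  haveI : Nontrivial (Euc N) := by
    apply Module.nontrivial_of_finrank_pos (R := ℝ)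
    rw [finrank_euclideanSpace_fin]; exact hN
  have key := MeasureTheory.integral_fun_norm_addHaar (volume : Measure (Euc N))
    (Set.indicator (Set.Iio r) φ)
  have hdim : Module.finrank ℝ (Euc N) = N := finrank_euclideanSpace_fin
  rw [hdim] at key
  have lhs_eq : (fun x : Euc N => Set.indicator (Set.Iio r) φ ‖x‖)
      = Set.indicator (Metric.ball (0:Euc N) r) (fun z => φ ‖z‖) := by
    funext x
    by_cases h : ‖x‖ < r
    · rw [Set.indicator_of_mem (Set.mem_Iio.mpr h), Set.indicator_of_mem (mem_ball_zero_iff.mpr h)]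
    · rw [Set.indicator_of_notMem (fun hc => h (Set.mem_Iio.mp hc)),
        Set.indicator_of_notMem (fun hc => h (mem_ball_zero_iff.mp hc))]
  rw [lhs_eq, integral_indicator measurableSet_ball] at key
  have rhs_eq : ∀ y : ℝ, y ^ (N - 1 : ℕ) • Set.indicator (Set.Iio r) φ y
      = Set.indicator (Set.Iio r) (fun t => t ^ (N - 1 : ℕ) * φ t) y := by
    intro y
    by_cases h : y ∈ Set.Iio r
    · rw [Set.indicator_of_mem h, Set.indicator_of_mem h, smul_eq_mul]
    · rw [Set.indicator_of_notMem h, Set.indicator_of_notMem h, smul_zero]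
  simp_rw [rhs_eq] at key
  rw [setIntegral_indicator measurableSet_Iio, Set.Ioi_inter_Iio] at key
  rw [key, nsmul_eq_mul, smul_eq_mul, measureReal_def]
  ring

lemma coord_integral_eq {N : ℕ} (i j : Fin N) (q : ℝ) (w : ℝ → ℝ) (r : ℝ) :
    ∫ z in Metric.ball (0:Euc N) r, |z i| ^ q * w ‖z‖
      = ∫ z in Metric.ball (0:Euc N) r, |z j| ^ q * w ‖z‖ := by
  classical
  set e : Euc N ≃ₗᵢ[ℝ] Euc N :=
    LinearIsometryEquiv.piLpCongrLeft 2 ℝ ℝ (Equiv.swap i j) with he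
  have hmp : MeasurePreserving e volume volume := e.measurePreserving
  have hemb : MeasurableEmbedding e := e.toHomeomorph.measurableEmbedding
  have hball : ⇑e ⁻¹' (Metric.ball (0:Euc N) r) = Metric.ball (0:Euc N) r := by
    ext z
    simp only [Set.mem_preimage, mem_ball_zero_iff, e.norm_map]
  have key := hmp.setIntegral_preimage_emb hemb
    (fun z => |z i| ^ q * w ‖z‖) (Metric.ball (0:Euc N) r)
  rw [hball] at key
  rw [← key]
  apply setIntegral_congr_fun measurableSet_ball
  intro z _
  have h1 : ‖e z‖ = ‖z‖ := e.norm_map z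
  have h2 : (e z) i = z j := by
    rw [he]
    rw [LinearIsometryEquiv.piLpCongrLeft_apply]
    rw [Equiv.piCongrLeft'_apply, Equiv.symm_swap, Equiv.swap_apply_left]
  simp only [h1, h2]

lemma norm_rpow_le_sum {N : ℕ} (hN : 0 < N) {q : ℝ} (hq : 0 ≤ q) (z : Euc N) :
    ‖z‖ ^ q ≤ (N:ℝ) ^ (q/2) * ∑ j : Fin N, |z j| ^ q := by
  haveI : Nonempty (Fin N) := Fin.pos_iff_nonempty.mp hN
  obtain ⟨j, -, hj⟩ := Finset.exists_max_image Finset.univ (fun k => |z k|) ⟨Classical.arbitrary _,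
    Finset.mem_univ _⟩
  have h1 : ‖z‖ ≤ Real.sqrt N * |z j| := by
    rw [EuclideanSpace.norm_eq]
    have : ∑ k, ‖z k‖ ^ 2 ≤ (N:ℝ) * |z j| ^ 2 := by
      calc ∑ k, ‖z k‖ ^ 2 ≤ ∑ _k : Fin N, |z j| ^ 2 := by
            apply Finset.sum_le_sum
            intro k _
            rw [Real.norm_eq_abs]
            exact pow_le_pow_left₀ (abs_nonneg _) (hj k (Finset.mem_univ k)) 2
        _ = (N:ℝ) * |z j| ^ 2 := by rw [Finset.sum_const, Finset.card_univ, Fintype.card_fin,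
            nsmul_eq_mul]
    calc Real.sqrt (∑ k, ‖z k‖ ^ 2) ≤ Real.sqrt ((N:ℝ) * |z j| ^ 2) := Real.sqrt_le_sqrt this
      _ = Real.sqrt N * |z j| := by
          rw [Real.sqrt_mul (Nat.cast_nonneg N), Real.sqrt_sq_eq_abs, abs_abs]
  have h2 : ‖z‖ ^ q ≤ (Real.sqrt N * |z j|) ^ q :=
    Real.rpow_le_rpow (norm_nonneg z) h1 hq
  have h3 : (Real.sqrt N * |z j|) ^ q = (N:ℝ) ^ (q/2) * |z j| ^ q := by
    rw [Real.mul_rpow (Real.sqrt_nonneg _) (abs_nonneg _)]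
    congr 1
    rw [Real.sqrt_eq_rpow, ← Real.rpow_mul (Nat.cast_nonneg N)]
    ring_nf
  have h4 : |z j| ^ q ≤ ∑ k : Fin N, |z k| ^ q := by
    apply Finset.single_le_sum (fun k _ => Real.rpow_nonneg (abs_nonneg _) q) (Finset.mem_univ j)
  calc ‖z‖ ^ q ≤ (N:ℝ) ^ (q/2) * |z j| ^ q := by rw [← h3]; exact h2
    _ ≤ (N:ℝ) ^ (q/2) * ∑ k : Fin N, |z k| ^ q := by
        apply mul_le_mul_of_nonneg_left h4 (by positivity)

lemma cont_integrableOn_bounded {N : ℕ} {f : Euc N → ℝ} (hf : Continuous f) {S : Set (Euc N)}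
    (hS : Bornology.IsBounded S) : IntegrableOn f S volume :=
  ((hf.locallyIntegrable).integrableOn_isCompact hS.isCompact_closure).mono_set subset_closure

lemma abs_coord_le_norm {N : ℕ} (z : Euc N) (i : Fin N) : |z i| ≤ ‖z‖ := by
  rw [EuclideanSpace.norm_eq]
  have h : |z i| = Real.sqrt (‖z i‖^2) := by
    rw [Real.sqrt_sq_eq_abs, Real.norm_eq_abs, abs_abs]
  rw [h]
  apply Real.sqrt_le_sqrt
  exact Finset.single_le_sum (f := fun k => ‖z k‖^2) (fun k _ => sq_nonneg _) (Finset.mem_univ i)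

lemma F_cont {N : ℕ} (i : Fin N) {q : ℝ} (p lam : ℝ) (hq : 0 < q) :
    Continuous (fun z : Euc N => |z i| ^ q * (1 + lam^2 * ‖z‖^2) ^ (-p)) := by
  apply Continuous.mul
  · apply Continuous.rpow_const
    · exact continuous_abs.comp (EuclideanSpace.proj (𝕜 := ℝ) i).continuous
    · intro z; right; exact hq.le
  · apply Continuous.rpow_const (by fun_prop)
    intro z; left; positivity

lemma bubble_abs_rpow {N : ℕ} {s q lam : ℝ} (i : Fin N) (x y : Euc N)
    (hA : 0 < (N:ℝ) - 2*s) (hlam : 0 < lam) (hq : 0 < q) :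
    |bubbleDx N s i x lam y| ^ q
      = ((N:ℝ) - 2*s) ^ q * lam ^ ((((N:ℝ) - 2*s + 2)/2 + 1) * q) *
        (|x i - y i| ^ q * (1 + lam^2 * ‖x - y‖^2) ^ (-((((N:ℝ)-2*s+2)/2) * q))) := by
  set A := (N:ℝ) - 2*s with hA'
  set P := (A + 2)/2 with hP'
  set D := 1 + lam^2 * ‖x - y‖^2 with hD'
  have hD : (0:ℝ) < D := by rw [hD']; positivity
  have hDP : (0:ℝ) < D ^ P := Real.rpow_pos_of_pos hD P
  have hlP : (0:ℝ) < lam ^ P := Real.rpow_pos_of_pos hlam P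
  have habs : |bubbleDx N s i x lam y| = A * lam ^ P * lam * |x i - y i| * D ^ (-P) := by
    unfold bubbleDx
    rw [abs_div, abs_mul, abs_mul, abs_mul, Real.rpow_neg hD.le]
    rw [abs_neg, abs_of_pos hA, abs_of_pos hlP, abs_of_pos hlam, abs_of_pos hDP]
    ring
  rw [habs, Real.mul_rpow (by positivity) (by positivity),
    Real.mul_rpow (by positivity) (abs_nonneg _),
    Real.mul_rpow (by positivity) hlam.le,
    Real.mul_rpow hA.le hlP.le]
  have e1 : (lam ^ P) ^ q = lam ^ (P*q) := (Real.rpow_mul hlam.le P q).symm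
  have e2 : (D ^ (-P)) ^ q = D ^ (-(P*q)) := by
    rw [← Real.rpow_mul hD.le]; ring_nf
  have e3 : lam ^ (P*q) * lam ^ q = lam ^ ((P+1)*q) := by
    rw [← Real.rpow_add hlam]; ring_nf
  rw [e1, e2, ← e3]
  ring

lemma ball_integral_bounds {N : ℕ} (hN : 0 < N) (i : Fin N) {q p lam r : ℝ}
    (hq : 1 ≤ q) (hp : 0 < p) (hlam : 0 < lam) (hr : 0 < r) :
    ((N:ℝ) ^ (q/2) * N)⁻¹ *
        (((N : ℝ) * (volume (Metric.ball (0 : Euc N) 1)).toReal) *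
          (lam ^ (-(((N:ℝ)-1+q)+1)) * Psi ((N:ℝ)-1+q) p (lam * r)))
      ≤ (∫ z in Metric.ball (0:Euc N) r, |z i| ^ q * (1 + lam^2 * ‖z‖^2) ^ (-p)) ∧
    (∫ z in Metric.ball (0:Euc N) r, |z i| ^ q * (1 + lam^2 * ‖z‖^2) ^ (-p))
      ≤ ((N : ℝ) * (volume (Metric.ball (0 : Euc N) 1)).toReal) *
          (lam ^ (-(((N:ℝ)-1+q)+1)) * Psi ((N:ℝ)-1+q) p (lam * r)) := by
  have hq0 : (0:ℝ) < q := lt_of_lt_of_le one_pos hq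
  set m := (N:ℝ) - 1 + q with hm'
  have hN1 : (1:ℝ) ≤ (N:ℝ) := by exact_mod_cast hN
  have hm : 0 < m := by rw [hm']; linarith
  set κ := (N : ℝ) * (volume (Metric.ball (0 : Euc N) 1)).toReal with hκ'
  set φ : ℝ → ℝ := fun t => t ^ q * (1 + lam^2 * t^2) ^ (-p) with hφ'
  -- the radial integral
  have hrad : ∫ z in Metric.ball (0:Euc N) r, ‖z‖ ^ q * (1 + lam^2 * ‖z‖^2) ^ (-p)
      = κ * (lam ^ (-(m+1)) * Psi m p (lam * r)) := by
    have h0 : ∫ z in Metric.ball (0:Euc N) r, ‖z‖ ^ q * (1 + lam^2 * ‖z‖^2) ^ (-p)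
        = ∫ z in Metric.ball (0:Euc N) r, φ ‖z‖ := rfl
    rw [h0, radial_ball hN φ hr]
    have h1 : ∫ t in Set.Ioo (0:ℝ) r, t ^ (N - 1 : ℕ) * φ t
        = ∫ t in Set.Ioo (0:ℝ) r, t ^ m * (1 + lam^2 * t^2) ^ (-p) := by
      apply setIntegral_congr_fun measurableSet_Ioo
      intro t ht
      have ht0 : 0 < t := ht.1
      rw [hφ']
      show (t:ℝ) ^ (N - 1 : ℕ) * (t ^ q * (1 + lam^2 * t^2) ^ (-p))
        = t ^ m * (1 + lam^2 * t^2) ^ (-p)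
      rw [← Real.rpow_natCast t (N-1), ← mul_assoc, ← Real.rpow_add ht0]
      congr 2
      rw [hm']
      push_cast [Nat.cast_sub hN]
      ring
    rw [h1]
    have h2 : ∫ t in Set.Ioo (0:ℝ) r, t ^ m * (1 + lam^2 * t^2) ^ (-p)
        = ∫ t in (0:ℝ)..r, t ^ m * (1 + lam^2 * t^2) ^ (-p) := by
      rw [intervalIntegral.integral_of_le hr.le, MeasureTheory.integral_Ioc_eq_integral_Ioo]
    rw [h2, scaling hm hlam hr.le]
  have hball : Bornology.IsBounded (Metric.ball (0:Euc N) r) := Metric.isBounded_ball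
  have hFc : ∀ j : Fin N, Continuous (fun z : Euc N => |z j| ^ q * (1 + lam^2 * ‖z‖^2) ^ (-p)) :=
    fun j => F_cont j p lam hq0
  have hFi : ∀ j : Fin N, IntegrableOn
      (fun z : Euc N => |z j| ^ q * (1 + lam^2 * ‖z‖^2) ^ (-p))
      (Metric.ball (0:Euc N) r) volume := fun j => cont_integrableOn_bounded (hFc j) hball
  have hGc : Continuous (fun z : Euc N => ‖z‖ ^ q * (1 + lam^2 * ‖z‖^2) ^ (-p)) := by
    apply Continuous.mul
    · apply Continuous.rpow_const continuous_norm
      intro z; right; exact hq0.le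
    · apply Continuous.rpow_const (by fun_prop)
      intro z; left; positivity
  have hGi : IntegrableOn (fun z : Euc N => ‖z‖ ^ q * (1 + lam^2 * ‖z‖^2) ^ (-p))
      (Metric.ball (0:Euc N) r) volume := cont_integrableOn_bounded hGc hball
  constructor
  · -- lower bound via coordinate symmetry
    rw [← hrad]
    have key : ∫ z in Metric.ball (0:Euc N) r, ‖z‖ ^ q * (1 + lam^2 * ‖z‖^2) ^ (-p)
        ≤ ((N:ℝ) ^ (q/2) * N) *
          ∫ z in Metric.ball (0:Euc N) r, |z i| ^ q * (1 + lam^2 * ‖z‖^2) ^ (-p) := by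
      have step1 : ∫ z in Metric.ball (0:Euc N) r, ‖z‖ ^ q * (1 + lam^2 * ‖z‖^2) ^ (-p)
          ≤ ∫ z in Metric.ball (0:Euc N) r,
              (N:ℝ) ^ (q/2) * ∑ j : Fin N, |z j| ^ q * (1 + lam^2 * ‖z‖^2) ^ (-p) := by
        apply setIntegral_mono_on hGi _ measurableSet_ball
        · intro z _
          have h1 := norm_rpow_le_sum hN hq0.le z
          have h2 : (0:ℝ) ≤ (1 + lam^2 * ‖z‖^2) ^ (-p) := by positivity
          calc ‖z‖ ^ q * (1 + lam^2 * ‖z‖^2) ^ (-p)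
              ≤ ((N:ℝ) ^ (q/2) * ∑ j : Fin N, |z j| ^ q) * (1 + lam^2 * ‖z‖^2) ^ (-p) :=
                mul_le_mul_of_nonneg_right h1 h2
            _ = (N:ℝ) ^ (q/2) * ∑ j : Fin N, |z j| ^ q * (1 + lam^2 * ‖z‖^2) ^ (-p) := by
                rw [mul_assoc, Finset.sum_mul]
        · apply Integrable.const_mul
          apply integrable_finset_sum
          intro j _
          exact hFi j
      have step2 : ∫ z in Metric.ball (0:Euc N) r,
            (N:ℝ) ^ (q/2) * ∑ j : Fin N, |z j| ^ q * (1 + lam^2 * ‖z‖^2) ^ (-p)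
          = ((N:ℝ) ^ (q/2) * N) *
            ∫ z in Metric.ball (0:Euc N) r, |z i| ^ q * (1 + lam^2 * ‖z‖^2) ^ (-p) := by
        rw [MeasureTheory.integral_const_mul]
        rw [integral_finset_sum _ (fun j _ => hFi j)]
        have hswap : ∀ j : Fin N,
            ∫ z in Metric.ball (0:Euc N) r, |z j| ^ q * (1 + lam^2 * ‖z‖^2) ^ (-p)
            = ∫ z in Metric.ball (0:Euc N) r, |z i| ^ q * (1 + lam^2 * ‖z‖^2) ^ (-p) := by
          intro j
          exact coord_integral_eq j i q (fun t => (1 + lam^2 * t^2) ^ (-p)) r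
        rw [Finset.sum_congr rfl (fun j _ => hswap j), Finset.sum_const, Finset.card_univ,
          Fintype.card_fin, nsmul_eq_mul]
        ring
      linarith [step1.trans_eq step2]
    have hpos : (0:ℝ) < (N:ℝ) ^ (q/2) * N := by positivity
    rw [inv_mul_le_iff₀ hpos] -- (a)⁻¹ * R ≤ I ↔ R ≤ a * I  (check direction)
    exact key
  · -- upper bound via |z i| ≤ ‖z‖
    rw [← hrad]
    apply setIntegral_mono_on (hFi i) hGi measurableSet_ball
    intro z _
    apply mul_le_mul_of_nonneg_right _ (by positivity)
    exact Real.rpow_le_rpow (abs_nonneg _) (abs_coord_le_norm z i) hq0.le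

lemma rate1D_nonneg (γ : ℝ) {T : ℝ} (hT : 1 ≤ T) : 0 ≤ rate1D γ T := by
  unfold rate1D
  split_ifs
  · positivity
  · exact Real.log_nonneg hT
  · norm_num

end St10

open St10 Metric Set Bornology

set_option maxHeartbeats 2000000 in
/-- Lemma B.1, `L^q` norms of the derivative of the bubble: uniformly for
`x` in a compact subset `K ⊆ Ω` and `λ` large, `‖∂_{x_i} U_{x,λ}‖_{L^q(Ω)} ∼ ρ(q,λ)`. -/
theorem statement10 (N : ℕ) (s : ℝ) (hs0 : 0 < s) (hs1 : s < 1) (hN : 2 * s < (N : ℝ))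
    (Ω : Set (Euc N)) (hΩo : IsOpen Ω) (hΩb : Bornology.IsBounded Ω)
    (K : Set (Euc N)) (hK : IsCompact K) (hKΩ : K ⊆ Ω)
    (q : ℝ) (hq : 1 ≤ q) (i : Fin N) :
    ∃ c C lam0 : ℝ, 0 < c ∧ c ≤ C ∧ 2 ≤ lam0 ∧
      ∀ x ∈ K, ∀ lam : ℝ, lam0 ≤ lam →
        c * bubbleDxRate N s q lam ≤
            (∫ y in Ω, |bubbleDx N s i x lam y| ^ q) ^ (1 / q) ∧
          (∫ y in Ω, |bubbleDx N s i x lam y| ^ q) ^ (1 / q) ≤ C * bubbleDxRate N s q lam := by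
  classical
  have hq0 : (0:ℝ) < q := lt_of_lt_of_le one_pos hq
  have hN0R : (0:ℝ) < N := lt_of_le_of_lt (by positivity) hN
  have hN0 : 0 < N := by exact_mod_cast hN0R
  have hN1 : (1:ℝ) ≤ (N:ℝ) := by exact_mod_cast hN0
  set A : ℝ := (N:ℝ) - 2*s with hA'
  have hA : 0 < A := by rw [hA']; linarith
  set P : ℝ := (A+2)/2 with hP'
  have hP : 0 < P := by rw [hP']; linarith
  set p : ℝ := P * q with hp'
  have hp : 0 < p := by rw [hp']; positivity
  set m : ℝ := (N:ℝ) - 1 + q with hm'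
  have hm : 0 < m := by rw [hm']; linarith
  set γ : ℝ := m - 2*p + 1 with hγ'
  have hγeq : γ = (N:ℝ) - q*(A+1) := by rw [hγ', hm', hp', hP']; ring
  -- geometry: inner radius and outer radius
  obtain ⟨δ, hδpos, hδsub⟩ := hK.exists_thickening_subset_open hΩo hKΩ
  set r0 : ℝ := min δ 1 with hr0'
  have hr0pos : 0 < r0 := lt_min hδpos one_pos
  have hr0le1 : r0 ≤ 1 := min_le_right _ _
  have hr0sub : ∀ x ∈ K, Metric.ball x r0 ⊆ Ω := by
    intro x hx
    exact (Metric.ball_subset_ball (min_le_left _ _)).trans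
      ((Metric.ball_subset_thickening hx δ).trans hδsub)
  obtain ⟨R1, hR1⟩ := hΩb.subset_ball (0 : Euc N)
  set R2 : ℝ := 2 * max R1 1 with hR2'
  have hR2pos : (0:ℝ) < R2 := by
    have : (1:ℝ) ≤ max R1 1 := le_max_right _ _
    rw [hR2']; linarith
  have hR2ge1 : (1:ℝ) ≤ R2 := by
    have : (1:ℝ) ≤ max R1 1 := le_max_right _ _
    rw [hR2']; linarith
  have hr0R2 : r0 ≤ R2 := hr0le1.trans hR2ge1
  have hΩsub : ∀ x ∈ K, Ω ⊆ Metric.ball x R2 := by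
    intro x hx y hy
    have hyb : y ∈ Metric.ball (0:Euc N) R1 := hR1 hy
    have hxb : x ∈ Metric.ball (0:Euc N) R1 := hR1 (hKΩ hx)
    rw [Metric.mem_ball] at *
    have hmax : R1 ≤ max R1 1 := le_max_left _ _
    calc dist y x ≤ dist y 0 + dist 0 x := dist_triangle _ _ _
      _ = dist y 0 + dist x 0 := by rw [dist_comm 0 x]
      _ < R1 + R1 := by linarith
      _ ≤ R2 := by rw [hR2']; linarith
  -- constants
  set κ : ℝ := (N : ℝ) * (volume (Metric.ball (0 : Euc N) 1)).toReal with hκ'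
  have hκpos : 0 < κ := by
    apply mul_pos hN0R
    apply ENNReal.toReal_pos (measure_ball_pos _ _ one_pos).ne'
      (measure_ball_lt_top).ne
  set Cl : ℝ := ((N:ℝ) ^ (q/2) * N)⁻¹ * κ with hCl'
  have hClpos : 0 < Cl := by
    apply mul_pos _ hκpos
    rw [inv_pos]; positivity
  have hClκ : Cl ≤ κ := by
    rw [hCl']
    have h1 : (1:ℝ) ≤ (N:ℝ) ^ (q/2) * N := by
      have : (1:ℝ) ≤ (N:ℝ) ^ (q/2) := Real.one_le_rpow hN1 (by positivity)
      nlinarith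
    calc ((N:ℝ) ^ (q/2) * N)⁻¹ * κ ≤ 1 * κ := by
          apply mul_le_mul_of_nonneg_right _ hκpos.le
          exact inv_le_one_of_one_le₀ h1
      _ = κ := one_mul κ
  obtain ⟨c1, C1, T0, hc1, hc1C1, hT0, hΨ⟩ := Psi_asymp m p hm hp
  -- the threshold
  set lam0 : ℝ := max (max 2 (T0 / r0)) (max (T0 / R2)
    (Real.exp (2*|Real.log r0| + |Real.log R2| + 1))) with hlam0'
  have hlam02 : (2:ℝ) ≤ lam0 := le_trans (le_max_left _ _) (le_max_left _ _)
  -- master bounds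
  have key : ∀ x ∈ K, ∀ lam : ℝ, lam0 ≤ lam →
      ((A ^ q * Cl * c1) * (lam ^ (P*q - (N:ℝ)) * rate1D γ (lam*r0))
          ≤ ∫ y in Ω, |bubbleDx N s i x lam y| ^ q) ∧
        (∫ y in Ω, |bubbleDx N s i x lam y| ^ q)
          ≤ (A ^ q * κ * C1) * (lam ^ (P*q - (N:ℝ)) * rate1D γ (lam*R2)) := by
    intro x hx lam hlam
    have hlam2 : (2:ℝ) ≤ lam := le_trans hlam02 hlam
    have hlampos : (0:ℝ) < lam := by linarith
    have hTr0 : T0 ≤ lam * r0 := by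
      have h := le_trans (le_trans (le_max_right 2 (T0/r0)) (le_max_left _ _)) hlam
      rw [div_le_iff₀ hr0pos] at h
      linarith [h]
    have hTR2 : T0 ≤ lam * R2 := by
      have h := le_trans (le_trans (le_max_left (T0/R2) _) (le_max_right _ _)) hlam
      rw [div_le_iff₀ hR2pos] at h
      linarith [h]
    -- pointwise rewriting of the integrand
    have hpt : ∀ y : Euc N, |bubbleDx N s i x lam y| ^ q
        = A ^ q * lam ^ ((P + 1) * q) *
          (|(x - y) i| ^ q * (1 + lam^2 * ‖x - y‖^2) ^ (-p)) := by
      intro y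
      rw [bubble_abs_rpow i x y (by rw [← hA']; exact hA) hlampos hq0]
      rw [PiLp.sub_apply]
    have hJ : ∫ y in Ω, |bubbleDx N s i x lam y| ^ q
        = A ^ q * lam ^ ((P + 1) * q) *
          ∫ y in Ω, |(x - y) i| ^ q * (1 + lam^2 * ‖x - y‖^2) ^ (-p) := by
      simp_rw [hpt]
      rw [MeasureTheory.integral_const_mul]
    -- the inner integral over Ω, sandwiched by balls
    set F : Euc N → ℝ := fun z => |z i| ^ q * (1 + lam^2 * ‖z‖^2) ^ (-p) with hF'
    have hFeq : ∀ y : Euc N, |(x - y) i| ^ q * (1 + lam^2 * ‖x - y‖^2) ^ (-p) = F (x - y) :=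
      fun y => rfl
    have hFc : Continuous F := F_cont i p lam hq0
    have hFnn : ∀ z, 0 ≤ F z := by
      intro z; rw [hF']; positivity
    have hcomp : Continuous fun y : Euc N => F (x - y) :=
      hFc.comp (continuous_const.sub continuous_id)
    have hIR2 : IntegrableOn (fun y => F (x - y)) (Metric.ball x R2) volume :=
      cont_integrableOn_bounded hcomp Metric.isBounded_ball
    have hIΩ : IntegrableOn (fun y => F (x - y)) Ω volume :=
      hIR2.mono_set (hΩsub x hx)
    have hlow : ∫ y in Metric.ball x r0, F (x - y) ≤ ∫ y in Ω, F (x - y) := by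
      apply setIntegral_mono_set hIΩ
      · filter_upwards with y using hFnn (x - y)
      · exact HasSubset.Subset.eventuallyLE (hr0sub x hx)
    have hhigh : ∫ y in Ω, F (x - y) ≤ ∫ y in Metric.ball x R2, F (x - y) := by
      apply setIntegral_mono_set hIR2
      · filter_upwards with y using hFnn (x - y)
      · exact HasSubset.Subset.eventuallyLE (hΩsub x hx)
    rw [translate_ball F x r0] at hlow
    rw [translate_ball F x R2] at hhigh
    have hbl := ball_integral_bounds hN0 i hq hp hlampos hr0pos (r := r0)
    have hbh := ball_integral_bounds hN0 i hq hp hlampos hR2pos (r := R2)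
    -- Psi bounds
    have hΨl := (hΨ (lam*r0) hTr0).1
    have hΨh := (hΨ (lam*R2) hTR2).2
    -- exponent identity
    have hexp : lam ^ ((P+1)*q) * lam ^ (-(m+1)) = lam ^ (P*q - (N:ℝ)) := by
      rw [← Real.rpow_add hlampos, hm']; ring_nf
    have hAq : (0:ℝ) < A ^ q := Real.rpow_pos_of_pos hA q
    have hlamexp : (0:ℝ) < lam ^ (-(m+1)) := Real.rpow_pos_of_pos hlampos _
    have hlamPq : (0:ℝ) < lam ^ ((P+1)*q) := Real.rpow_pos_of_pos hlampos _
    have hlamE : (0:ℝ) < lam ^ (P*q - (N:ℝ)) := Real.rpow_pos_of_pos hlampos _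
    constructor
    · -- lower bound
      rw [hJ]
      simp_rw [hFeq]
      have step1 : Cl * (lam ^ (-(m+1)) * Psi m p (lam * r0))
          ≤ ∫ y in Ω, F (x - y) := by
        refine le_trans ?_ hlow
        have h := hbl.1
        rw [hCl', mul_assoc]
        exact h
      have step2 : c1 * rate1D γ (lam*r0) ≤ Psi m p (lam*r0) := by
        rw [hγ'] at *; exact hΨl
      have hrate_nn : 0 ≤ rate1D γ (lam*r0) := rate1D_nonneg γ (by linarith)
      calc A ^ q * Cl * c1 * (lam ^ (P*q - (N:ℝ)) * rate1D γ (lam*r0))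
          = (A ^ q * lam ^ ((P+1)*q)) *
              (Cl * (lam ^ (-(m+1)) * (c1 * rate1D γ (lam*r0)))) := by
            rw [← hexp]; ring
        _ ≤ (A ^ q * lam ^ ((P+1)*q)) * (Cl * (lam ^ (-(m+1)) * Psi m p (lam*r0))) := by
            apply mul_le_mul_of_nonneg_left _ (by positivity)
            apply mul_le_mul_of_nonneg_left _ hClpos.le
            exact mul_le_mul_of_nonneg_left step2 hlamexp.le
        _ ≤ (A ^ q * lam ^ ((P+1)*q)) * ∫ y in Ω, F (x - y) := by
            apply mul_le_mul_of_nonneg_left step1 (by positivity)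
    · -- upper bound
      rw [hJ]
      simp_rw [hFeq]
      have step1 : ∫ y in Ω, F (x - y)
          ≤ κ * (lam ^ (-(m+1)) * Psi m p (lam * R2)) := by
        exact le_trans hhigh hbh.2
      have step2 : Psi m p (lam*R2) ≤ C1 * rate1D γ (lam*R2) := by
        rw [hγ'] at *; exact hΨh
      calc (A ^ q * lam ^ ((P+1)*q)) * ∫ y in Ω, F (x - y)
          ≤ (A ^ q * lam ^ ((P+1)*q)) * (κ * (lam ^ (-(m+1)) * Psi m p (lam*R2))) := by
            apply mul_le_mul_of_nonneg_left step1 (by positivity)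
        _ ≤ (A ^ q * lam ^ ((P+1)*q)) * (κ * (lam ^ (-(m+1)) * (C1 * rate1D γ (lam*R2)))) := by
            apply mul_le_mul_of_nonneg_left _ (by positivity)
            apply mul_le_mul_of_nonneg_left _ hκpos.le
            exact mul_le_mul_of_nonneg_left step2 hlamexp.le
        _ = A ^ q * κ * C1 * (lam ^ (P*q - (N:ℝ)) * rate1D γ (lam*R2)) := by
            rw [← hexp]; ring
  -- case analysis on γ
  set cL : ℝ := A ^ q * Cl * c1 with hcL'
  set CU : ℝ := A ^ q * κ * C1 with hCU'
  have hAq : (0:ℝ) < A ^ q := Real.rpow_pos_of_pos hA q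
  have hcLpos : 0 < cL := by rw [hcL']; positivity
  have hCUpos : 0 < CU := by
    rw [hCU']
    have hC1 : 0 < C1 := lt_of_lt_of_le hc1 hc1C1
    positivity
  have hcLCU : cL ≤ CU := by
    rw [hcL', hCU']
    apply mul_le_mul (mul_le_mul_of_nonneg_left hClκ hAq.le) hc1C1 hc1.le
    positivity
  have hA1 : (0:ℝ) < A + 1 := by linarith
  have e1 : (N:ℝ) - 2*s + 1 = A + 1 := by rw [hA']
  have e2 : ((N:ℝ) - 2*s + 2)/2 = P := by rw [hP', hA']
  have e3 : ((N:ℝ) - 2*s)/2 = A/2 := by rw [hA']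
  have hqne : q ≠ 0 := hq0.ne'
  rcases lt_trichotomy γ 0 with hc | hc | hc
  · -- subcritical: q > N/(A+1), rate = lam ^ (P - N/q)
    have hNlt : (N:ℝ) < q * (A+1) := by
      have := hγeq; linarith [hγeq ▸ hc]
    have hcond : (N:ℝ)/(A+1) < q := by rw [div_lt_iff₀ hA1]; linarith
    refine ⟨cL ^ (1/q), CU ^ (1/q), lam0, by positivity,
      Real.rpow_le_rpow hcLpos.le hcLCU (by positivity), hlam02, ?_⟩
    intro x hx lam hlam
    obtain ⟨hKl, hKu⟩ := key x hx lam hlam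
    have hlampos : (0:ℝ) < lam := by linarith [le_trans hlam02 hlam]
    have hrater0 : rate1D γ (lam*r0) = 1 := by
      unfold rate1D; rw [if_neg (by linarith), if_neg (by linarith)]
    have hrateR2 : rate1D γ (lam*R2) = 1 := by
      unfold rate1D; rw [if_neg (by linarith), if_neg (by linarith)]
    rw [hrater0, mul_one] at hKl
    rw [hrateR2, mul_one] at hKu
    have hbr : bubbleDxRate N s q lam = lam ^ (P - (N:ℝ)/q) := by
      unfold bubbleDxRate
      rw [e1, e2, if_pos hcond]
    have hexpq : (P*q - (N:ℝ)) * (1/q) = P - (N:ℝ)/q := by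
      field_simp
    have hsplit : ∀ b : ℝ, 0 < b → (b * lam ^ (P*q - (N:ℝ))) ^ (1/q)
        = b ^ (1/q) * lam ^ (P - (N:ℝ)/q) := by
      intro b hb
      rw [Real.mul_rpow hb.le (Real.rpow_pos_of_pos hlampos _).le,
        ← Real.rpow_mul hlampos.le, hexpq]
    have hJnn : 0 ≤ ∫ y in Ω, |bubbleDx N s i x lam y| ^ q :=
      le_trans (by positivity) hKl
    constructor
    · rw [hbr, ← hsplit cL hcLpos]
      exact Real.rpow_le_rpow (by positivity) hKl (by positivity)
    · rw [hbr, ← hsplit CU hCUpos]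
      exact Real.rpow_le_rpow hJnn hKu (by positivity)
  · -- critical: q = N/(A+1), rate = lam ^ (-(A/2)) * (log lam) ^ (1/q)
    have hNeq : (N:ℝ) = q * (A+1) := by linarith [hγeq ▸ hc]
    have hcondeq : q = (N:ℝ)/(A+1) := by
      rw [eq_div_iff hA1.ne']; linarith
    have hinv : (A+1)/(N:ℝ) = 1/q := by
      rw [hNeq]; field_simp
    have hPqN : P*q - (N:ℝ) = (-(A/2))*q := by
      rw [hNeq, hP']; ring
    refine ⟨(cL/2) ^ (1/q), (2*CU) ^ (1/q), lam0, by positivity,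
      Real.rpow_le_rpow (by positivity) (by linarith) (by positivity), hlam02, ?_⟩
    intro x hx lam hlam
    obtain ⟨hKl, hKu⟩ := key x hx lam hlam
    have hlam2 : (2:ℝ) ≤ lam := le_trans hlam02 hlam
    have hlampos : (0:ℝ) < lam := by linarith
    have hloglam : 0 < Real.log lam := Real.log_pos (by linarith)
    have hlamexp : Real.exp (2*|Real.log r0| + |Real.log R2| + 1) ≤ lam :=
      le_trans (le_trans (le_max_right _ _) (le_max_right _ _)) hlam
    have hloglam2 : 2*|Real.log r0| + |Real.log R2| + 1 ≤ Real.log lam := by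
      have h := Real.log_le_log (Real.exp_pos _) hlamexp
      rwa [Real.log_exp] at h
    have hlogr0 : Real.log lam / 2 ≤ Real.log (lam * r0) := by
      rw [Real.log_mul hlampos.ne' hr0pos.ne']
      have h1 : -Real.log r0 ≤ |Real.log r0| := neg_le_abs _
      have h2 : (0:ℝ) ≤ |Real.log R2| := abs_nonneg _
      linarith
    have hlogR2 : Real.log (lam * R2) ≤ 2 * Real.log lam := by
      rw [Real.log_mul hlampos.ne' hR2pos.ne']
      have h1 : Real.log R2 ≤ |Real.log R2| := le_abs_self _
      have h2 : (0:ℝ) ≤ |Real.log r0| := abs_nonneg _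
      linarith
    have hrater0 : rate1D γ (lam*r0) = Real.log (lam*r0) := by
      unfold rate1D; rw [if_neg (by linarith), if_pos hc]
    have hrateR2 : rate1D γ (lam*R2) = Real.log (lam*R2) := by
      unfold rate1D; rw [if_neg (by linarith), if_pos hc]
    rw [hrater0] at hKl
    rw [hrateR2] at hKu
    have hbr : bubbleDxRate N s q lam
        = lam ^ (-(A/2)) * Real.log lam ^ ((1:ℝ)/q) := by
      unfold bubbleDxRate
      rw [e1, e3, if_neg (by rw [← hcondeq]; exact lt_irrefl q),
        if_pos (by rw [← hcondeq]), hinv]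
    have hlamE : (0:ℝ) < lam ^ ((-(A/2))*q) := Real.rpow_pos_of_pos hlampos _
    have hsplit : ∀ b : ℝ, 0 < b → (b * (lam ^ ((-(A/2))*q) * Real.log lam)) ^ (1/q)
        = b ^ (1/q) * (lam ^ (-(A/2)) * Real.log lam ^ ((1:ℝ)/q)) := by
      intro b hb
      rw [Real.mul_rpow hb.le (by positivity),
        Real.mul_rpow hlamE.le hloglam.le,
        ← Real.rpow_mul hlampos.le]
      have : (-(A/2))*q*(1/q) = -(A/2) := by field_simp
      rw [this]
    have hJnn : 0 ≤ ∫ y in Ω, |bubbleDx N s i x lam y| ^ q := by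
      refine le_trans ?_ hKl
      have := Real.rpow_pos_of_pos hlampos (P*q - (N:ℝ))
      have hl0 : (0:ℝ) < Real.log (lam * r0) := by linarith
      positivity
    constructor
    · rw [hbr, ← hsplit (cL/2) (by positivity)]
      apply Real.rpow_le_rpow (by positivity) _ (by positivity)
      calc cL/2 * (lam ^ ((-(A/2))*q) * Real.log lam)
          = cL * (lam ^ ((-(A/2))*q) * (Real.log lam / 2)) := by ring
        _ ≤ cL * (lam ^ ((-(A/2))*q) * Real.log (lam*r0)) := by
            apply mul_le_mul_of_nonneg_left _ hcLpos.le
            exact mul_le_mul_of_nonneg_left hlogr0 hlamE.le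
        _ ≤ ∫ y in Ω, |bubbleDx N s i x lam y| ^ q := by rw [← hPqN]; exact hKl
    · rw [hbr, ← hsplit (2*CU) (by positivity)]
      apply Real.rpow_le_rpow hJnn _ (by positivity)
      calc ∫ y in Ω, |bubbleDx N s i x lam y| ^ q
          ≤ CU * (lam ^ ((-(A/2))*q) * Real.log (lam*R2)) := by rw [← hPqN]; exact hKu
        _ ≤ CU * (lam ^ ((-(A/2))*q) * (2*Real.log lam)) := by
            apply mul_le_mul_of_nonneg_left _ hCUpos.le
            exact mul_le_mul_of_nonneg_left hlogR2 hlamE.le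
        _ = 2*CU * (lam ^ ((-(A/2))*q) * Real.log lam) := by ring
  · -- supercritical: q < N/(A+1), rate = lam ^ (-(A/2))
    have hNgt : q * (A+1) < (N:ℝ) := by linarith [hγeq ▸ hc]
    have hcond1 : ¬ ((N:ℝ)/(A+1) < q) := by
      rw [not_lt, le_div_iff₀ hA1]; linarith
    have hcond2 : q ≠ (N:ℝ)/(A+1) := by
      intro h
      rw [eq_div_iff hA1.ne'] at h
      linarith
    have hPqN : P*q - (N:ℝ) + γ = (-(A/2))*q := by
      rw [hγeq, hP']; ring
    have hr0γ : (0:ℝ) < r0 ^ γ := Real.rpow_pos_of_pos hr0pos γ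
    have hR2γ : (0:ℝ) < R2 ^ γ := Real.rpow_pos_of_pos hR2pos γ
    have hr0R2γ : r0 ^ γ ≤ R2 ^ γ := Real.rpow_le_rpow hr0pos.le hr0R2 hc.le
    refine ⟨(cL * r0 ^ γ) ^ (1/q), (CU * R2 ^ γ) ^ (1/q), lam0, by positivity,
      Real.rpow_le_rpow (by positivity)
        (mul_le_mul hcLCU hr0R2γ hr0γ.le hCUpos.le) (by positivity), hlam02, ?_⟩
    intro x hx lam hlam
    obtain ⟨hKl, hKu⟩ := key x hx lam hlam
    have hlampos : (0:ℝ) < lam := by linarith [le_trans hlam02 hlam]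
    have hrater0 : rate1D γ (lam*r0) = (lam*r0) ^ γ := by
      unfold rate1D; rw [if_pos hc]
    have hrateR2 : rate1D γ (lam*R2) = (lam*R2) ^ γ := by
      unfold rate1D; rw [if_pos hc]
    rw [hrater0] at hKl
    rw [hrateR2] at hKu
    have hcomb : ∀ r : ℝ, 0 < r → lam ^ (P*q - (N:ℝ)) * (lam*r) ^ γ
        = r ^ γ * lam ^ ((-(A/2))*q) := by
      intro r hr
      rw [Real.mul_rpow hlampos.le hr.le, ← mul_assoc, ← Real.rpow_add hlampos, hPqN]
      ring
    rw [hcomb r0 hr0pos] at hKl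
    rw [hcomb R2 hR2pos] at hKu
    have hbr : bubbleDxRate N s q lam = lam ^ (-(A/2)) := by
      unfold bubbleDxRate
      rw [e1, e3, if_neg hcond1, if_neg hcond2]
    have hlamE : (0:ℝ) < lam ^ ((-(A/2))*q) := Real.rpow_pos_of_pos hlampos _
    have hsplit : ∀ b : ℝ, 0 < b → (b * lam ^ ((-(A/2))*q)) ^ (1/q)
        = b ^ (1/q) * lam ^ (-(A/2)) := by
      intro b hb
      rw [Real.mul_rpow hb.le hlamE.le, ← Real.rpow_mul hlampos.le]
      have : (-(A/2))*q*(1/q) = -(A/2) := by field_simp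
      rw [this]
    have hJnn : 0 ≤ ∫ y in Ω, |bubbleDx N s i x lam y| ^ q :=
      le_trans (by positivity) hKl
    constructor
    · rw [hbr, ← hsplit (cL * r0 ^ γ) (by positivity)]
      apply Real.rpow_le_rpow (by positivity) _ (by positivity)
      calc cL * r0 ^ γ * lam ^ ((-(A/2))*q)
          = cL * (r0 ^ γ * lam ^ ((-(A/2))*q)) := by ring
        _ ≤ ∫ y in Ω, |bubbleDx N s i x lam y| ^ q := hKl
    · rw [hbr, ← hsplit (CU * R2 ^ γ) (by positivity)]
      apply Real.rpow_le_rpow hJnn _ (by positivity)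
      calc ∫ y in Ω, |bubbleDx N s i x lam y| ^ q
          ≤ CU * (R2 ^ γ * lam ^ ((-(A/2))*q)) := hKu
        _ = CU * R2 ^ γ * lam ^ ((-(A/2))*q) := by ring
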